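/- Solutions are strictly increasing in the initial value: if w₀† < w₀‡, γ ∈ ℝ, and w†, w‡ are solutions with parameters (w₀†,γ) and (w₀‡,γ) respectively, then w†(x) < w‡(x) for every x ≥ 0. -/

import Mathlib

open Set MeasureTheory Filter Topology

/-- `piU U c w = min_{μ ∈ U} (μ·w + c(μ))`, realized as an infimum. -/
noncomputable def piU (U : Set ℝ) (c : ℝ → ℝ) (w : ℝ) : ℝ :=
  sInf ((fun μ => μ * w + c μ) '' U)

/-- `w` is a continuously differentiable solution on `[0,∞)` of
`(σ²/2)·w′(x) + π(w(x)) + h(x) = γ` with `w(0) = w₀`, with derivative `w'`. -/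
def IsSolution (σ : ℝ) (U : Set ℝ) (c h : ℝ → ℝ) (w₀ γ : ℝ) (w w' : ℝ → ℝ) : Prop :=
  w 0 = w₀ ∧ ContinuousOn w' (Set.Ici 0) ∧
  (∀ x ∈ Set.Ici (0:ℝ), HasDerivWithinAt w (w' x) (Set.Ici 0) x) ∧
  (∀ x ∈ Set.Ici (0:ℝ), σ ^ 2 / 2 * w' x + piU U c (w x) + h x = γ)

lemma piU_le_add {U : Set ℝ} (hUne : U.Nonempty) (hUcpt : IsCompact U)
    {c : ℝ → ℝ} (hc : Continuous c) {M : ℝ} (hM : ∀ μ ∈ U, |μ| ≤ M) (a b : ℝ) :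
    piU U c a ≤ piU U c b + M * |a - b| := by
  obtain ⟨μ, hμU, hmin⟩ := hUcpt.exists_isMinOn hUne
    ((continuous_id.mul continuous_const).add hc).continuousOn
  have hb : piU U c b = μ * b + c μ := by
    refine IsLeast.csInf_eq ⟨⟨μ, hμU, rfl⟩, ?_⟩
    rintro y ⟨ν, hν, rfl⟩
    exact isMinOn_iff.mp hmin ν hν
  have bdd : BddBelow ((fun μ => μ * a + c μ) '' U) :=
    (hUcpt.image_of_continuousOn
      ((continuous_id.mul continuous_const).add hc).continuousOn).bddBelow
  have h1 : piU U c a ≤ μ * a + c μ := csInf_le bdd ⟨μ, hμU, rfl⟩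
  have h2 : μ * a - μ * b ≤ M * |a - b| := by
    calc μ * a - μ * b = μ * (a - b) := by ring
      _ ≤ |μ * (a - b)| := le_abs_self _
      _ = |μ| * |a - b| := abs_mul _ _
      _ ≤ M * |a - b| := mul_le_mul_of_nonneg_right (hM μ hμU) (abs_nonneg _)
  rw [hb]; linarith

lemma piU_lip {U : Set ℝ} (hUne : U.Nonempty) (hUcpt : IsCompact U)
    {c : ℝ → ℝ} (hc : Continuous c) {M : ℝ} (hM : ∀ μ ∈ U, |μ| ≤ M) (a b : ℝ) :
    |piU U c a - piU U c b| ≤ M * |a - b| := by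
  have h1 := piU_le_add hUne hUcpt hc hM a b
  have h2 := piU_le_add hUne hUcpt hc hM b a
  rw [abs_sub_comm b a] at h2
  rw [abs_le]; constructor <;> linarith

theorem stmt_7 (σ : ℝ) (hσ : 0 < σ) (U : Set ℝ) (hUne : U.Nonempty) (hUcpt : IsCompact U)
    (c : ℝ → ℝ) (hc : Continuous c) (h : ℝ → ℝ)
    (hhcont : ContinuousOn h (Set.Ici 0)) (hhmono : StrictMonoOn h (Set.Ici 0))
    (hh0 : h 0 = 0) (hhtop : Filter.Tendsto h Filter.atTop Filter.atTop)
    (w₀₁ w₀₂ γ : ℝ) (hw₀ : w₀₁ < w₀₂) (w₁ w₁' w₂ w₂' : ℝ → ℝ)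
    (hw₁ : IsSolution σ U c h w₀₁ γ w₁ w₁')
    (hw₂ : IsSolution σ U c h w₀₂ γ w₂ w₂') :
    ∀ x : ℝ, 0 ≤ x → w₁ x < w₂ x := by
  obtain ⟨hw10, hw1c, hw1d, hw1e⟩ := hw₁
  obtain ⟨hw20, hw2c, hw2d, hw2e⟩ := hw₂
  obtain ⟨M, hM⟩ := (Bornology.IsBounded.exists_norm_le hUcpt.isBounded)
  simp only [Real.norm_eq_abs] at hM
  have hσ2 : (0:ℝ) < σ ^ 2 / 2 := by positivity
  set K : ℝ := 2 * M / σ ^ 2 with hK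
  set d : ℝ → ℝ := fun x => w₂ x - w₁ x with hd
  have hd0 : 0 < d 0 := by simp [hd, hw10, hw20, hw₀]
  have hdcont : ContinuousOn d (Set.Ici 0) :=
    (fun x hx => ((hw2d x hx).continuousWithinAt).sub ((hw1d x hx).continuousWithinAt))
  -- key derivative bound
  have hbound : ∀ y ∈ Set.Ici (0:ℝ), |w₂' y - w₁' y| ≤ K * |d y| := by
    intro y hy
    have e1 := hw1e y hy
    have e2 := hw2e y hy
    have hdy : w₂' y - w₁' y = (piU U c (w₁ y) - piU U c (w₂ y)) / (σ ^ 2 / 2) := by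
      field_simp
      nlinarith [e1, e2]
    rw [hdy, abs_div, abs_of_pos hσ2, div_le_iff₀ hσ2]
    have := piU_lip hUne hUcpt hc hM (w₁ y) (w₂ y)
    have habs : |w₁ y - w₂ y| = |d y| := by rw [hd]; exact abs_sub_comm _ _
    rw [habs] at this
    calc |piU U c (w₁ y) - piU U c (w₂ y)| ≤ M * |d y| := this
      _ = K * |d y| * (σ ^ 2 / 2) := by
          rw [hK]; field_simp
  by_contra hcon
  push_neg at hcon
  obtain ⟨x, hx0, hxle⟩ := hcon
  -- there is a touching point x* ∈ [0, x]
  have : (0:ℝ) ∈ Set.Icc (d x) (d 0) := ⟨by simpa [hd] using hxle, le_of_lt hd0⟩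
  obtain ⟨xs, hxsmem, hxs⟩ := intermediate_value_Icc' hx0
    (hdcont.mono (Set.Icc_subset_Ici_self)) this
  have hxs0 : 0 < xs := by
    rcases lt_or_eq_of_le hxsmem.1 with hlt | heq
    · exact hlt
    · exfalso; rw [← heq] at hxs; linarith [hd0, hxs]
  -- reversed function g t = d (xs - t)
  set g : ℝ → ℝ := fun t => d (xs - t) with hg
  have hgcont : ContinuousOn g (Set.Icc 0 xs) := by
    have hm : Set.MapsTo (fun t => xs - t) (Set.Icc 0 xs) (Set.Ici (0:ℝ)) :=
      fun t ht => by simp only [Set.mem_Ici]; linarith [ht.2]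
    exact hdcont.comp ((continuous_const.sub continuous_id).continuousOn) hm
  have hgderiv : ∀ t ∈ Set.Ico 0 xs,
      HasDerivWithinAt g (-(w₂' (xs - t) - w₁' (xs - t))) (Set.Ici t) t := by
    intro t ht
    have hpos : 0 < xs - t := by linarith [ht.2]
    have hd2 : HasDerivAt w₂ (w₂' (xs - t)) (xs - t) :=
      (hw2d (xs - t) (le_of_lt hpos)).hasDerivAt (Ici_mem_nhds hpos)
    have hd1 : HasDerivAt w₁ (w₁' (xs - t)) (xs - t) :=
      (hw1d (xs - t) (le_of_lt hpos)).hasDerivAt (Ici_mem_nhds hpos)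
    have hdd : HasDerivAt d (w₂' (xs - t) - w₁' (xs - t)) (xs - t) := hd2.sub hd1
    have hinner : HasDerivAt (fun s => xs - s) (-1 : ℝ) t := by
      simpa using (hasDerivAt_id t).const_sub xs
    have := HasDerivAt.comp t hdd hinner
    have h2 : HasDerivAt g ((w₂' (xs - t) - w₁' (xs - t)) * -1) t := this
    rw [show -(w₂' (xs - t) - w₁' (xs - t)) = (w₂' (xs - t) - w₁' (xs - t)) * -1 by ring]
    exact h2.hasDerivWithinAt
  have key := norm_le_gronwallBound_of_norm_deriv_right_le (δ := 0) (K := K) (ε := 0)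
    hgcont hgderiv (by simp [hg, hxs]) ?_ xs ⟨le_of_lt hxs0, le_refl xs⟩
  · rw [gronwallBound_ε0] at key
    simp only [hg, sub_self, Real.norm_eq_abs, zero_mul] at key
    have : |d 0| ≤ 0 := key
    have := abs_of_pos hd0 ▸ this
    linarith
  · intro t ht
    have hpos : 0 < xs - t := by linarith [ht.2]
    have h1 := hbound (xs - t) (le_of_lt hpos)
    simp only [hg, Real.norm_eq_abs, norm_neg, add_zero]
    exact h1
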